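/- arXiv:2407.20019 — 7 statements merged into one kernel-verified Lean document; each statement's English description precedes it below -/
import Mathlib

section
/- For all real numbers b ≥ 0 and all real e, the function M₂(b,e) = (2 + e)² / ((1/4)(1 - b + 2e)² + (3/4)(1 + b)²) satisfies M₂(b,e) ≤ 4, with equality at b = e = 0. -/
theorem stmt_3 :
    (∀ b e : ℝ, 0 ≤ b →
      (2 + e)^2 / ((1/4) * (1 - b + 2*e)^2 + (3/4) * (1 + b)^2) ≤ 4) ∧
    (2 + 0 : ℝ)^2 / ((1/4) * (1 - 0 + 2*0 : ℝ)^2 + (3/4) * (1 + 0 : ℝ)^2) = 4 := by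
  constructor
  · intro b e hb
    have hd : (0:ℝ) < (1/4) * (1 - b + 2*e)^2 + (3/4) * (1 + b)^2 := by nlinarith [sq_nonneg (1 - b + 2*e), sq_nonneg (1 + b)]
    rw [div_le_iff₀ hd]
    nlinarith [sq_nonneg (3*e - 2*b), sq_nonneg b, hb]
  · norm_num
end

section
/- For all real numbers b, e with b ≥ 0 and -b ≤ e ≤ 0, the function M̃₂(b,e) = (2 - e)² / ((1/4)(1 - b + 2e)² + (3/4)(1 + b)²) satisfies M̃₂(b,e) ≤ 13/3, with equality at b = 1/6, e = -1/6. -/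
theorem stmt_4 :
    (∀ b e : ℝ, 0 ≤ b → -b ≤ e → e ≤ 0 →
      (2 - e)^2 / ((1/4) * (1 - b + 2*e)^2 + (3/4) * (1 + b)^2) ≤ 13/3) ∧
    (2 - (-1/6) : ℝ)^2 /
      ((1/4) * (1 - 1/6 + 2*(-1/6) : ℝ)^2 + (3/4) * (1 + 1/6 : ℝ)^2) = 13/3 := by
  constructor
  · intro b e hb hbe he
    have hd : (0:ℝ) < (1/4) * (1 - b + 2*e)^2 + (3/4) * (1 + b)^2 := by positivity
    rw [div_le_iff₀ hd]
    nlinarith [sq_nonneg (b + e), sq_nonneg (6*b - 1 + 7*(b+e)), sq_nonneg (6*e + 1), sq_nonneg (b - 1/6), sq_nonneg (e + 1/6)]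
  · norm_num
end

section
/- For all real numbers b, s, t with 0 ≤ b ≤ 1, 0 ≤ s ≤ 1, 0 ≤ t ≤ 1, the function M₃(b,s,t) = (2 + 2b - s - t)² / ((1/4)(1 - b + 2s - 2t)² + (3/4)(1 + b)²) satisfies M₃(b,s,t) ≤ 16/3, with equality when b = 1 and s = t = 0. -/
theorem stmt_5 :
    (∀ b s t : ℝ, 0 ≤ b → b ≤ 1 → 0 ≤ s → s ≤ 1 → 0 ≤ t → t ≤ 1 →
      (2 + 2*b - s - t)^2 /
        ((1/4) * (1 - b + 2*s - 2*t)^2 + (3/4) * (1 + b)^2) ≤ 16/3) ∧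
    (2 + 2*1 - 0 - 0 : ℝ)^2 /
      ((1/4) * (1 - 1 + 2*0 - 2*0 : ℝ)^2 + (3/4) * (1 + 1 : ℝ)^2) = 16/3 := by
  constructor
  · intro b s t hb hb1 hs hs1 ht ht1
    have hd : (0:ℝ) < (1/4) * (1 - b + 2*s - 2*t)^2 + (3/4) * (1 + b)^2 := by
      nlinarith [sq_nonneg (1 - b + 2*s - 2*t), sq_nonneg (1 + b)]
    rw [div_le_iff₀ hd]
    nlinarith [sq_nonneg (1 - b + 2*s - 2*t), sq_nonneg (b - 1), sq_nonneg (s + t), sq_nonneg (s - t), mul_nonneg hs ht, sq_nonneg (1 - b + s + t), mul_nonneg (mul_nonneg hs ht) hb]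
  · norm_num
end

section
/- For all real numbers b, s, t with 0 ≤ b, 0 ≤ s ≤ 1, 0 ≤ t, the function M₅(b,s,t) = (max{2, 2b} + s + t)² / ((1/4)(1 - b + 2s + t)² + (3/4)(1 + t + b)²) satisfies M₅(b,s,t) ≤ 13/3, with equality when b = 6, s = 1, t = 0. -/
theorem stmt_9 :
    (∀ b s t : ℝ, 0 ≤ b → 0 ≤ s → s ≤ 1 → 0 ≤ t →
      (max 2 (2*b) + s + t)^2 /
        ((1/4) * (1 - b + 2*s + t)^2 + (3/4) * (1 + t + b)^2) ≤ 13/3) ∧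
    (max 2 (2*6) + 1 + 0 : ℝ)^2 /
      ((1/4) * (1 - 6 + 2*1 + 0 : ℝ)^2 + (3/4) * (1 + 0 + 6 : ℝ)^2) = 13/3 := by
  constructor
  · intro b s t hb hs hs1 ht
    have hD : 0 < (1/4) * (1 - b + 2*s + t)^2 + (3/4) * (1 + t + b)^2 := by
      have h1 : (0:ℝ) < (1 + t + b)^2 := by positivity
      nlinarith [sq_nonneg (1 - b + 2*s + t)]
    rw [div_le_iff₀ hD]
    rcases le_total (2:ℝ) (2*b) with h | h
    · rw [max_eq_right h]
      have hb1 : (1:ℝ) ≤ b := by linarith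
      nlinarith [sq_nonneg (b - 6*s), mul_nonneg (by linarith : (0:ℝ) ≤ b - 1) (by linarith : (0:ℝ) ≤ 1 - s), mul_nonneg (by linarith : (0:ℝ) ≤ 1 - s) (by linarith : (0:ℝ) ≤ 1 + s), mul_nonneg hs ht, mul_nonneg hb ht, sq_nonneg t, ht]
    · rw [max_eq_left h]
      nlinarith [mul_nonneg hb (by linarith : (0:ℝ) ≤ 1 - s), mul_nonneg hb ht, mul_nonneg hs ht, sq_nonneg b, sq_nonneg s, sq_nonneg t, ht]
  · norm_num
end

section
/- For all real numbers b, s, t with 0 ≤ b, 0 ≤ s, 0 ≤ t, the function M₈(b,s,t) = (2 + s + t)² / ((1/4)(1 - b - s + t)² + (3/4)(1 + s + t + b)²) satisfies M₈(b,s,t) ≤ 4, with equality at b = s = t = 0. -/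
theorem stmt_13 :
    (∀ b s t : ℝ, 0 ≤ b → 0 ≤ s → 0 ≤ t →
      (2 + s + t)^2 /
        ((1/4) * (1 - b - s + t)^2 + (3/4) * (1 + s + t + b)^2) ≤ 4) ∧
    (2 + 0 + 0 : ℝ)^2 /
      ((1/4) * (1 - 0 - 0 + 0 : ℝ)^2 + (3/4) * (1 + 0 + 0 + 0 : ℝ)^2) = 4 := by
  constructor
  · intro b s t hb hs ht
    have hd : (0:ℝ) < (1/4) * (1 - b - s + t)^2 + (3/4) * (1 + s + t + b)^2 := by
      nlinarith [sq_nonneg (1 - b - s + t), sq_nonneg (1 + s + t + b)]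
    rw [div_le_iff₀ hd]
    nlinarith [sq_nonneg (b + s), sq_nonneg (s*t), mul_nonneg hs ht, mul_nonneg hb ht, mul_nonneg hb hs, sq_nonneg t, sq_nonneg b]
  · norm_num
end

section
/- For all real numbers b, s, t with 0 ≤ b, 0 ≤ s, 0 ≤ t, the function M₉(b,s,t) = (2 + 2b + 2s + 2t)² / ((1/4)(1 - b - s + t)² + (3/4)(1 + s + t + b)²) satisfies M₉(b,s,t) ≤ 16/3, with equality whenever t = b + s - 1 (and this is nonnegative). -/
theorem stmt_14 :
    (∀ b s t : ℝ, 0 ≤ b → 0 ≤ s → 0 ≤ t →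
      (2 + 2*b + 2*s + 2*t)^2 /
        ((1/4) * (1 - b - s + t)^2 + (3/4) * (1 + s + t + b)^2) ≤ 16/3) ∧
    (∀ b s t : ℝ, 0 ≤ b → 0 ≤ s → 0 ≤ t → t = b + s - 1 →
      (2 + 2*b + 2*s + 2*t)^2 /
        ((1/4) * (1 - b - s + t)^2 + (3/4) * (1 + s + t + b)^2) = 16/3) := by
  constructor
  · intro b s t hb hs ht
    have hpos : 0 < (1/4) * (1 - b - s + t)^2 + (3/4) * (1 + s + t + b)^2 := by
      nlinarith [sq_nonneg (1 - b - s + t), sq_nonneg (1 + s + t + b)]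
    rw [div_le_iff₀ hpos]
    nlinarith [sq_nonneg (1 - b - s + t)]
  · intro b s t hb hs ht hteq
    subst hteq
    have h1 : (1 : ℝ) - b - s + (b + s - 1) = 0 := by ring
    have h2 : (0:ℝ) < 1 + s + (b + s - 1) + b := by nlinarith
    field_simp
    ring
end

section
/- Let f : X → ℝ² be an L-bi-Lipschitz map, and let x, y, z, w ∈ X satisfy d(x,y) = d(y,z) = d(z,w) = d(w,x) = π/2 and d(x,z) = d(y,w) = π (four evenly spaced points on an intrinsic circle of circumference 2π). If f is 1-Lipschitz, then min(‖f(x) - f(z)‖, ‖f(y) - f(w)‖) ≤ π/√2; consequently the distortion of f is at least √2. -/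
lemma quad_ineq {E : Type*} [NormedAddCommGroup E] [InnerProductSpace ℝ E]
    (a b c d : E) :
    ‖a - c‖ ^ 2 + ‖b - d‖ ^ 2 ≤
      ‖a - b‖ ^ 2 + ‖b - c‖ ^ 2 + ‖c - d‖ ^ 2 + ‖d - a‖ ^ 2 := by
  have key : ‖a - b‖ ^ 2 + ‖b - c‖ ^ 2 + ‖c - d‖ ^ 2 + ‖d - a‖ ^ 2 =
      ‖a - c‖ ^ 2 + ‖b - d‖ ^ 2 + ‖a - b + c - d‖ ^ 2 := by
    simp only [← real_inner_self_eq_norm_sq, inner_sub_left, inner_sub_right,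
      inner_add_left, inner_add_right]
    rw [real_inner_comm b a, real_inner_comm c a, real_inner_comm c b,
      real_inner_comm d a, real_inner_comm d b, real_inner_comm d c]
    ring
  nlinarith [sq_nonneg ‖a - b + c - d‖]

theorem stmt_17 {X : Type*} [MetricSpace X] (L : NNReal)
    (f : X → EuclideanSpace ℝ (Fin 2)) (hbi : AntilipschitzWith L f)
    (hf : LipschitzWith 1 f) (x y z w : X)
    (hxy : dist x y = Real.pi / 2) (hyz : dist y z = Real.pi / 2)
    (hzw : dist z w = Real.pi / 2) (hwx : dist w x = Real.pi / 2)
    (hxz : dist x z = Real.pi) (hyw : dist y w = Real.pi) :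
    min ‖f x - f z‖ ‖f y - f w‖ ≤ Real.pi / Real.sqrt 2 ∧
    (Real.sqrt 2 * ‖f x - f z‖ ≤ dist x z ∨
      Real.sqrt 2 * ‖f y - f w‖ ≤ dist y w) := by
  have hπpos := Real.pi_pos
  have lip : ∀ a b : X, ‖f a - f b‖ ≤ dist a b := fun a b => by
    have := hf.dist_le_mul a b
    simpa [dist_eq_norm] using this
  have h1 : ‖f x - f y‖ ≤ Real.pi / 2 := hxy ▸ lip x y
  have h2 : ‖f y - f z‖ ≤ Real.pi / 2 := hyz ▸ lip y z
  have h3 : ‖f z - f w‖ ≤ Real.pi / 2 := hzw ▸ lip z w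
  have h4 : ‖f w - f x‖ ≤ Real.pi / 2 := hwx ▸ lip w x
  have hq := quad_ineq (f x) (f y) (f z) (f w)
  have hsum : ‖f x - f z‖ ^ 2 + ‖f y - f w‖ ^ 2 ≤ Real.pi ^ 2 := by
    nlinarith [norm_nonneg (f x - f y), norm_nonneg (f y - f z),
      norm_nonneg (f z - f w), norm_nonneg (f w - f x)]
  have hmin2 : (min ‖f x - f z‖ ‖f y - f w‖) ^ 2 ≤ Real.pi ^ 2 / 2 := by
    rcases min_cases ‖f x - f z‖ ‖f y - f w‖ with ⟨h, hle⟩ | ⟨h, hle⟩ <;>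
      rw [h] <;> nlinarith [norm_nonneg (f x - f z), norm_nonneg (f y - f w)]
  have hs2 : Real.sqrt 2 > 0 := by positivity
  have hmin : min ‖f x - f z‖ ‖f y - f w‖ ≤ Real.pi / Real.sqrt 2 := by
    have hrhs : (Real.pi / Real.sqrt 2) ^ 2 = Real.pi ^ 2 / 2 := by
      rw [div_pow, Real.sq_sqrt (by norm_num : (2:ℝ) ≥ 0)]
    have hmn : (0:ℝ) ≤ min ‖f x - f z‖ ‖f y - f w‖ :=
      le_min (norm_nonneg _) (norm_nonneg _)
    have : (min ‖f x - f z‖ ‖f y - f w‖) ^ 2 ≤ (Real.pi / Real.sqrt 2) ^ 2 := by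
      rw [hrhs]; exact hmin2
    nlinarith [hmn, Real.pi_pos.le, div_nonneg Real.pi_pos.le hs2.le]
  refine ⟨hmin, ?_⟩
  rcases min_le_iff.mp hmin with h | h
  · left
    rw [hxz]
    calc Real.sqrt 2 * ‖f x - f z‖ ≤ Real.sqrt 2 * (Real.pi / Real.sqrt 2) := by
          exact mul_le_mul_of_nonneg_left h hs2.le
      _ = Real.pi := by field_simp
  · right
    rw [hyw]
    calc Real.sqrt 2 * ‖f y - f w‖ ≤ Real.sqrt 2 * (Real.pi / Real.sqrt 2) := by
          exact mul_le_mul_of_nonneg_left h hs2.le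
      _ = Real.pi := by field_simp
end
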